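/- Let k ≥ 1, let p < q be odd primes, n = 2^k·p·q, M = 2^{k+1} - 1, a = σ(n) - 2n. If n is weird then M < a < M(M+1). -/
import Mathlib


/-- Sum of the positive divisors of `n`. -/
def sigma' (n : ℕ) : ℕ := ∑ d ∈ n.divisors, d

/-- `n` is abundant if `σ(n) > 2n`. -/
def Abundant (n : ℕ) : Prop := 2 * n < sigma' n

/-- `n` is pseudoperfect (in the weak sense) if some subset of its proper divisors sums to `n`. -/
def Pseudoperfect (n : ℕ) : Prop := ∃ s ⊆ n.properDivisors, ∑ d ∈ s, d = n

/-- `n` is weird if it is abundant and no subset of its proper divisors sums to `n`. -/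
def Weird (n : ℕ) : Prop := Abundant n ∧ ¬ Pseudoperfect n

open Finset

lemma binary_subset : ∀ (m : ℕ), ∀ a < 2 ^ m, ∃ S ⊆ Finset.range m, ∑ i ∈ S, 2 ^ i = a := by
  intro m
  induction m with
  | zero =>
    intro a ha
    interval_cases a
    exact ⟨∅, by simp, by simp⟩
  | succ m ih =>
    intro a ha
    have hpow : 2 ^ (m + 1) = 2 ^ m * 2 := pow_succ 2 m
    by_cases h : a < 2 ^ m
    · obtain ⟨S, hS, hsum⟩ := ih a h
      exact ⟨S, hS.trans (Finset.range_subset_range.2 (Nat.le_succ m)), hsum⟩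
    · push_neg at h
      obtain ⟨S, hS, hsum⟩ := ih (a - 2 ^ m) (by omega)
      have hm : m ∉ S := fun hm => by simpa using hS hm
      refine ⟨insert m S, ?_, ?_⟩
      · intro x hx
        rcases Finset.mem_insert.1 hx with rfl | hx
        · exact Finset.self_mem_range_succ x
        · exact Finset.range_subset_range.2 (Nat.le_succ m) (hS hx)
      · rw [Finset.sum_insert hm, hsum]
        omega

lemma geom_two_sum (m : ℕ) : ∑ i ∈ Finset.range m, 2 ^ i = 2 ^ m - 1 := by
  induction m with
  | zero => simp
  | succ m ih =>
    rw [Finset.sum_range_succ, ih, pow_succ]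
    have : 1 ≤ 2 ^ m := Nat.one_le_two_pow
    omega

lemma sigma'_eq (k p q : ℕ) (hp : p.Prime) (hq : q.Prime) (hop : Odd p) (hoq : Odd q)
    (hne : p ≠ q) :
    sigma' (2 ^ k * p * q) = (2 ^ (k + 1) - 1) * (p + 1) * (q + 1) := by
  have c2p : Nat.Coprime (2 ^ k) p :=
    Nat.Coprime.pow_left _ (Nat.coprime_two_left.2 hop)
  have c2q : Nat.Coprime (2 ^ k) q :=
    Nat.Coprime.pow_left _ (Nat.coprime_two_left.2 hoq)
  have cpq : Nat.Coprime p q := (Nat.coprime_primes hp hq).2 hne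
  have cmul : Nat.Coprime (2 ^ k * p) q := Nat.Coprime.mul c2q cpq
  have h1 : sigma' (2 ^ k * p * q) = ArithmeticFunction.sigma 1 (2 ^ k * p * q) :=
    (ArithmeticFunction.sigma_one_apply _).symm
  rw [h1, ArithmeticFunction.isMultiplicative_sigma.map_mul_of_coprime cmul,
    ArithmeticFunction.isMultiplicative_sigma.map_mul_of_coprime c2p]
  have h2 : ArithmeticFunction.sigma 1 (2 ^ k) = 2 ^ (k + 1) - 1 := by
    rw [ArithmeticFunction.sigma_one_apply_prime_pow Nat.prime_two, geom_two_sum]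
  have hps : ArithmeticFunction.sigma 1 p = p + 1 := by
    have := ArithmeticFunction.sigma_one_apply_prime_pow (p := p) (i := 1) hp
    simpa [Finset.sum_range_succ, Nat.add_comm] using this
  have hqs : ArithmeticFunction.sigma 1 q = q + 1 := by
    have := ArithmeticFunction.sigma_one_apply_prime_pow (p := q) (i := 1) hq
    simpa [Finset.sum_range_succ, Nat.add_comm] using this
  rw [h2, hps, hqs]

theorem weird_abundance_bounds (k p q : ℕ) (hk : 1 ≤ k) (hp : p.Prime) (hq : q.Prime)
    (hop : Odd p) (hoq : Odd q) (hpq : p < q) (hw : Weird (2 ^ k * p * q)) :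
    ((2 : ℤ) ^ (k + 1) - 1) < (sigma' (2 ^ k * p * q) : ℤ) - 2 * (2 ^ k * p * q) ∧
      (sigma' (2 ^ k * p * q) : ℤ) - 2 * (2 ^ k * p * q) <
        (2 ^ (k + 1) - 1) * ((2 ^ (k + 1) - 1) + 1) := by
  set n := 2 ^ k * p * q with hn
  have hp3 : 3 ≤ p := by
    have := hp.two_le
    rcases Nat.lt_or_ge p 3 with h | h
    · interval_cases p
      · exact absurd hop (by decide)
    · exact h
  have hq3 : 3 ≤ q := by omega
  have hq0 : 0 < q := by omega
  have h2k : 1 ≤ 2 ^ k := Nat.one_le_two_pow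
  have hn0 : 0 < n := by positivity
  have habund : 2 * n < sigma' n := hw.1
  -- upper-bound side: both primes exceed M
  have hpM : 2 ^ (k + 1) ≤ p := by
    by_contra hple
    push_neg at hple
    obtain ⟨S, hS, hsum⟩ := binary_subset (k + 1) p hple
    apply hw.2
    set s1 : Finset ℕ := (Finset.range k).image fun j => 2 ^ j * (p * q) with hs1
    set s2 : Finset ℕ := S.image fun i => 2 ^ i * q with hs2
    have hinj2 : Function.Injective fun i : ℕ => 2 ^ i * q := by
      intro a b hab
      have := Nat.eq_of_mul_eq_mul_right hq0 hab
      exact Nat.pow_right_injective le_rfl this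
    have hinj1 : Function.Injective fun j : ℕ => 2 ^ j * (p * q) := by
      intro a b hab
      have := Nat.eq_of_mul_eq_mul_right (by positivity : 0 < p * q) hab
      exact Nat.pow_right_injective le_rfl this
    have hsum1 : ∑ d ∈ s1, d = (2 ^ k - 1) * (p * q) := by
      rw [hs1, Finset.sum_image fun a _ b _ h => hinj1 h, ← Finset.sum_mul, geom_two_sum]
    have hsum2 : ∑ d ∈ s2, d = p * q := by
      rw [hs2, Finset.sum_image fun a _ b _ h => hinj2 h, ← Finset.sum_mul, hsum]
    have hdisj : Disjoint s1 s2 := by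
      rw [Finset.disjoint_left]
      rintro x hx1 hx2
      rw [hs1, Finset.mem_image] at hx1
      rw [hs2, Finset.mem_image] at hx2
      obtain ⟨j, _, hj⟩ := hx1
      obtain ⟨i, _, hi⟩ := hx2
      have heq : 2 ^ j * p * q = 2 ^ i * q := by rw [mul_assoc]; rw [hj, ← hi]
      have heq2 : 2 ^ j * p = 2 ^ i := Nat.eq_of_mul_eq_mul_right hq0 heq
      have hdvd : p ∣ 2 ^ i := heq2 ▸ Dvd.intro_left _ rfl
      have : p ∣ 2 := hp.dvd_of_dvd_pow hdvd
      have := Nat.le_of_dvd (by norm_num) this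
      omega
    have hsub : s1 ∪ s2 ⊆ n.properDivisors := by
      intro x hx
      rw [Nat.mem_properDivisors]
      rcases Finset.mem_union.1 hx with hx | hx
      · rw [hs1, Finset.mem_image] at hx
        obtain ⟨j, hjr, hj⟩ := hx
        have hjk : j < k := Finset.mem_range.1 hjr
        constructor
        · rw [← hj, hn, mul_assoc]
          exact mul_dvd_mul (pow_dvd_pow 2 hjk.le) dvd_rfl
        · rw [← hj, hn, mul_assoc]
          exact (Nat.mul_lt_mul_right (by positivity)).2 (Nat.pow_lt_pow_right one_lt_two hjk)
      · rw [hs2, Finset.mem_image] at hx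
        obtain ⟨i, hir, hi⟩ := hx
        have hik : i ≤ k := Nat.lt_succ_iff.1 (Finset.mem_range.1 (hS hir))
        constructor
        · rw [← hi, hn]
          have : (2 : ℕ) ^ i ∣ 2 ^ k * p := dvd_mul_of_dvd_left (pow_dvd_pow 2 hik) p
          exact mul_dvd_mul this dvd_rfl
        · rw [← hi, hn]
          calc 2 ^ i * q ≤ 2 ^ k * q := Nat.mul_le_mul_right q (Nat.pow_le_pow_right (by norm_num) hik)
            _ < 2 ^ k * p * q := by
                rw [mul_assoc]
                exact (Nat.mul_lt_mul_left (by positivity)).2 (lt_mul_of_one_lt_left hq0 (by omega))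
    refine ⟨s1 ∪ s2, hsub, ?_⟩
    rw [Finset.sum_union hdisj, hsum1, hsum2, hn, mul_assoc]
    rw [Nat.sub_one_mul, Nat.sub_add_cancel (Nat.le_mul_of_pos_left _ (by positivity))]
  have hqM : 2 ^ (k + 1) ≤ q := by omega
  -- lower-bound side: a > M
  have haM : 2 ^ (k + 1) ≤ sigma' n - 2 * n := by
    by_contra hA
    push_neg at hA
    set aN := sigma' n - 2 * n with haN
    obtain ⟨S, hS, hsum⟩ := binary_subset (k + 1) aN hA
    apply hw.2
    set T : Finset ℕ := S.image fun i => 2 ^ i with hT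
    have hTsum : ∑ d ∈ T, d = aN := by
      rw [hT, Finset.sum_image fun a _ b _ h => Nat.pow_right_injective le_rfl h, hsum]
    have hTsub : T ⊆ n.properDivisors := by
      intro x hx
      rw [hT, Finset.mem_image] at hx
      obtain ⟨i, hir, hi⟩ := hx
      have hik : i ≤ k := Nat.lt_succ_iff.1 (Finset.mem_range.1 (hS hir))
      rw [Nat.mem_properDivisors, ← hi, hn]
      constructor
      · exact dvd_mul_of_dvd_left (dvd_mul_of_dvd_left (pow_dvd_pow 2 hik) p) q
      · calc 2 ^ i ≤ 2 ^ k := Nat.pow_le_pow_right (by norm_num) hik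
          _ < 2 ^ k * p * q := by
              rw [mul_assoc]
              exact lt_mul_of_one_lt_right (by positivity) (by nlinarith)
    refine ⟨n.properDivisors \ T, Finset.sdiff_subset, ?_⟩
    have hsd := Finset.sum_sdiff (f := id) hTsub
    have hps : ∑ d ∈ n.properDivisors, d = sigma' n - n := by
      have := Nat.sum_divisors_eq_sum_properDivisors_add_self (n := n)
      unfold sigma'
      omega
    simp only [id] at hsd
    omega
  -- final arithmetic over ℤ
  have hσ : (sigma' n : ℤ) = (2 ^ (k + 1) - 1) * (p + 1) * (q + 1) := by
    rw [sigma'_eq k p q hp hq hop hoq (by omega)]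
    have h1 : 1 ≤ 2 ^ (k + 1) := Nat.one_le_two_pow
    push_cast [h1]
    ring
  have hnZ : (n : ℤ) = 2 ^ k * p * q := by push_cast [hn]; ring
  have hpZ : (2 : ℤ) ^ (k + 1) ≤ (p : ℤ) := by exact_mod_cast hpM
  have hqZ : (2 : ℤ) ^ (k + 1) ≤ (q : ℤ) := by exact_mod_cast hqM
  have haZ : (2 : ℤ) ^ (k + 1) ≤ (sigma' n : ℤ) - 2 * n := by
    have h2n : 2 * n < sigma' n := habund
    have : (2 ^ (k + 1) : ℕ) ≤ sigma' n - 2 * n := haM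
    have h' : ((sigma' n - 2 * n : ℕ) : ℤ) = (sigma' n : ℤ) - 2 * n := by
      push_cast [Nat.le_of_lt h2n]
      omega
    rw [← h']
    exact_mod_cast this
  have hk2 : (2 : ℤ) ^ (k + 1) = 2 * 2 ^ k := by ring
  constructor
  · linarith
  · have key : (1 : ℤ) ≤ ((p : ℤ) - (2 ^ (k + 1) - 1)) * ((q : ℤ) - (2 ^ (k + 1) - 1)) := by
      have h1 : (1 : ℤ) ≤ (p : ℤ) - (2 ^ (k + 1) - 1) := by linarith
      have h2 : (1 : ℤ) ≤ (q : ℤ) - (2 ^ (k + 1) - 1) := by linarith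
      nlinarith
    rw [hσ, pow_succ]
    rw [pow_succ] at key
    nlinarith [key]
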